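/- Fix p ∈ (0,1/2) and a sequence C_n → ∞ with ε_n := C_n/n ∈ (0,1) for all n. Then there exist a constant c > 0 and N ∈ ℕ such that for all n ≥ N, the mixing time of the chain K_{n,p,ε_n} satisfies τ_mix(K_{n,p,ε_n}) ≥ c·n/C_n. -/

import Mathlib

/-- Total variation distance between probability mass functions on a finite type. -/
noncomputable def dTV {α : Type*} [Fintype α] (p q : α → ℝ) : ℝ :=
  (∑ x, |p x - q x|) / 2

/-- The birth-and-death kernel `Q_{n,p}` on the states `{1,…,n}` (modelled by `Fin n`,
with `i : Fin n` representing the state `i+1`):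
`Q(i,i+1) = p/2` for `i < n`, `Q(i,i−1) = (1−p)/2` for `i > 1`, `Q(i,i) = 1/2` for
`1 < i < n`, `Q(1,1) = (2−p)/2`, `Q(n,n) = (1+p)/2`. -/
noncomputable def Qnp (n : ℕ) (p : ℝ) : Fin n → Fin n → ℝ := fun i j =>
  if (j : ℕ) = (i : ℕ) + 1 ∧ (i : ℕ) + 1 < n then p / 2
  else if (j : ℕ) + 1 = (i : ℕ) then (1 - p) / 2
  else if j = i then
    (if (i : ℕ) = 0 then (2 - p) / 2 else if (i : ℕ) + 1 = n then (1 + p) / 2 else 1 / 2)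
  else 0

/-- The perturbed kernel `K_{n,p,ε}(i,j) = (1−ε) Q_{n,p}(i,j) + ε·1_{{j=n}}`. -/
noncomputable def Knpe (n : ℕ) (p ε : ℝ) : Fin n → Fin n → ℝ := fun i j =>
  (1 - ε) * Qnp n p i j + (if (j : ℕ) + 1 = n then ε else 0)

/-- `t`-step transition probabilities of a kernel on a finite state space. -/
noncomputable def kpow {n : ℕ} (P : Fin n → Fin n → ℝ) : ℕ → Fin n → Fin n → ℝ
  | 0 => fun i j => if i = j then 1 else 0
  | t + 1 => fun i j => ∑ l, kpow P t i l * P l j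

/-- The mixing time `τ_mix(P) = min{t : sup_i d_TV(P^t(i,·), π) < 1/4}`. -/
noncomputable def mixTime {n : ℕ} (P : Fin n → Fin n → ℝ) (pi : Fin n → ℝ) : ℕ :=
  sInf {t : ℕ | ∀ i, dTV (kpow P t i) pi < 1/4}

section aux
variable {n : ℕ} {p ε : ℝ}

private lemma sum_ite_coe (m : ℕ) (c : ℝ) :
    (∑ j : Fin n, if (j : ℕ) = m then c else 0) = if m < n then c else 0 := by
  split_ifs with h
  · rw [Finset.sum_eq_single (⟨m, h⟩ : Fin n)]
    · simp
    · intro b _ hb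
      rw [if_neg]
      simpa [Fin.ext_iff] using hb
    · intro hmem; exact absurd (Finset.mem_univ _) hmem
  · refine Finset.sum_eq_zero fun j _ => ?_
    rw [if_neg]
    have := j.isLt; omega

private lemma Q_nonneg (hp0 : 0 ≤ p) (hp1 : p ≤ 1) (i j : Fin n) : 0 ≤ Qnp n p i j := by
  unfold Qnp; split_ifs <;> linarith

private lemma Q_far (i j : Fin n) (h : (i:ℕ)+1 < (j:ℕ) ∨ (j:ℕ)+1 < (i:ℕ)) :
    Qnp n p i j = 0 := by
  have hji : j ≠ i := by
    intro e; rw [e] at h; omega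
  unfold Qnp
  rw [if_neg (by omega), if_neg (by omega), if_neg hji]

private lemma Q_decomp (i j : Fin n) : Qnp n p i j =
    (if (j:ℕ) = (i:ℕ)+1 ∧ (i:ℕ)+1 < n then p/2 else 0)
    + ((if (j:ℕ)+1 = (i:ℕ) then (1-p)/2 else 0)
    + (if (j:ℕ) = (i:ℕ) then
        (if (i:ℕ) = 0 then (2-p)/2 else if (i:ℕ)+1 = n then (1+p)/2 else 1/2) else 0)) := by
  simp only [Qnp, Fin.ext_iff]
  split_ifs <;> first | omega | ring

private lemma Q_rowsum (hn : 2 ≤ n) (i : Fin n) : ∑ j, Qnp n p i j = 1 := by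
  have hi := i.isLt
  simp only [Q_decomp, Finset.sum_add_distrib]
  have e1 : (∑ j : Fin n, if (j:ℕ) = (i:ℕ)+1 ∧ (i:ℕ)+1 < n then p/2 else 0)
      = if (i:ℕ)+1 < n then p/2 else 0 := by
    by_cases h : (i:ℕ)+1 < n
    · have hc : ∀ j : Fin n, ((j:ℕ) = (i:ℕ)+1 ∧ (i:ℕ)+1 < n) = ((j:ℕ) = (i:ℕ)+1) :=
        fun j => propext (and_iff_left h)
      simp only [hc]
      rw [sum_ite_coe, if_pos h]
    · simp [h]
  have e2 : (∑ j : Fin n, if (j:ℕ)+1 = (i:ℕ) then (1-p)/2 else 0)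
      = if (i:ℕ) = 0 then 0 else (1-p)/2 := by
    by_cases h : (i:ℕ) = 0
    · simp [h]
    · have hc : ∀ j : Fin n, ((j:ℕ)+1 = (i:ℕ)) = ((j:ℕ) = (i:ℕ)-1) := fun j => by
        apply propext; omega
      simp only [hc]
      rw [sum_ite_coe, if_pos (by omega), if_neg h]
  have e3 : (∑ j : Fin n, if (j:ℕ) = (i:ℕ) then
        (if (i:ℕ) = 0 then (2-p)/2 else if (i:ℕ)+1 = n then (1+p)/2 else 1/2) else 0)
      = (if (i:ℕ) = 0 then (2-p)/2 else if (i:ℕ)+1 = n then (1+p)/2 else 1/2) := by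
    rw [sum_ite_coe, if_pos hi]
  rw [e1, e2, e3]
  split_ifs <;> first | omega | ring

private lemma Q_rowsum_subset (hn : 2 ≤ n) (i : Fin n) (s : Finset (Fin n))
    (hs : ∀ j : Fin n, (j:ℕ) ≤ (i:ℕ)+1 → (i:ℕ) ≤ (j:ℕ)+1 → j ∈ s) :
    ∑ j ∈ s, Qnp n p i j = 1 := by
  rw [← Q_rowsum (p := p) hn i]
  symm
  apply (Finset.sum_subset (Finset.subset_univ s) _).symm
  intro j _ hj
  apply Q_far
  by_contra hc
  push_neg at hc
  exact hj (hs j (by omega) (by omega))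

private lemma K_nonneg (hp0 : 0 ≤ p) (hp1 : p ≤ 1) (hε0 : 0 ≤ ε) (hε1 : ε ≤ 1)
    (i j : Fin n) : 0 ≤ Knpe n p ε i j := by
  have hq := Q_nonneg (n := n) hp0 hp1 i j
  have h1 : 0 ≤ (1-ε) * Qnp n p i j := mul_nonneg (by linarith) hq
  unfold Knpe
  split_ifs <;> linarith

private lemma K_ge (hp0 : 0 ≤ p) (hp1 : p ≤ 1) (hε0 : 0 ≤ ε) (i j : Fin n) :
    (1-ε) * Qnp n p i j ≤ Knpe n p ε i j := by
  unfold Knpe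
  split_ifs <;> linarith

private lemma K_eq_of_ne_top (i j : Fin n) (h : (j:ℕ) + 1 ≠ n) :
    Knpe n p ε i j = (1-ε) * Qnp n p i j := by
  unfold Knpe
  rw [if_neg h, add_zero]

private lemma K_rowsum (hn : 2 ≤ n) (i : Fin n) : ∑ j, Knpe n p ε i j = 1 := by
  unfold Knpe
  rw [Finset.sum_add_distrib, ← Finset.mul_sum, Q_rowsum hn i]
  have hc : ∀ j : Fin n, ((j:ℕ) + 1 = n) = ((j:ℕ) = n - 1) := fun j => by
    apply propext; have := j.isLt; omega
  simp only [hc]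
  rw [sum_ite_coe, if_pos (by omega)]
  ring

private lemma kpow_nonneg {K : Fin n → Fin n → ℝ} (hK : ∀ i j, 0 ≤ K i j)
    (t : ℕ) (i j : Fin n) : 0 ≤ kpow K t i j := by
  induction t generalizing i j with
  | zero => simp only [kpow]; split_ifs <;> norm_num
  | succ t ih =>
    simp only [kpow]
    exact Finset.sum_nonneg fun l _ => mul_nonneg (ih i l) (hK l j)

private lemma kpow_rowsum (hn : 2 ≤ n) (t : ℕ) (i : Fin n) :
    ∑ j, kpow (Knpe n p ε) t i j = 1 := by
  induction t with
  | zero => simp [kpow]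
  | succ t ih =>
    simp only [kpow]
    rw [Finset.sum_comm]
    have hl : ∀ l : Fin n,
        ∑ j, kpow (Knpe n p ε) t i l * Knpe n p ε l j = kpow (Knpe n p ε) t i l := by
      intro l; rw [← Finset.mul_sum, K_rowsum hn l, mul_one]
    rw [Finset.sum_congr rfl fun l _ => hl l, ih]

private lemma pi_kpow (pi : Fin n → ℝ)
    (hstat : ∀ j, ∑ i, pi i * Knpe n p ε i j = pi j) (t : ℕ) (j : Fin n) :
    ∑ i, pi i * kpow (Knpe n p ε) t i j = pi j := by
  induction t generalizing j with
  | zero => simp [kpow]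
  | succ t ih =>
    simp only [kpow]
    have h1 : ∑ i, pi i * ∑ l, kpow (Knpe n p ε) t i l * Knpe n p ε l j
        = ∑ l, (∑ i, pi i * kpow (Knpe n p ε) t i l) * Knpe n p ε l j := by
      simp_rw [Finset.mul_sum, Finset.sum_mul, ← mul_assoc]
      rw [Finset.sum_comm]
    rw [h1]
    simp_rw [ih]
    exact hstat j

private lemma mass_low_le (hp0 : 0 ≤ p) (hp1 : p ≤ 1) (hε0 : 0 ≤ ε) (hε1 : ε ≤ 1)
    (hn : 2 ≤ n) :
    ∀ s : ℕ, ∀ i : Fin n,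
      (∑ j ∈ Finset.univ.filter (fun j : Fin n => (j:ℕ) + s + 1 < n),
        kpow (Knpe n p ε) s i j) ≤ (1-ε)^s := by
  have hK : ∀ i j : Fin n, 0 ≤ Knpe n p ε i j := K_nonneg hp0 hp1 hε0 hε1
  intro s
  induction s with
  | zero =>
    intro i
    simp only [kpow, pow_zero]
    calc (∑ j ∈ Finset.univ.filter (fun j : Fin n => (j:ℕ) + 0 + 1 < n),
            if i = j then (1:ℝ) else 0)
        ≤ ∑ j : Fin n, (if i = j then (1:ℝ) else 0) :=
          Finset.sum_le_sum_of_subset_of_nonneg (Finset.filter_subset _ _)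
            (fun j _ _ => by split_ifs <;> norm_num)
      _ = 1 := by simp
  | succ s ih =>
    intro i
    simp only [kpow]
    rw [Finset.sum_comm]
    have key : ∀ l : Fin n,
        (∑ j ∈ Finset.univ.filter (fun j : Fin n => (j:ℕ) + (s+1) + 1 < n), Knpe n p ε l j)
          ≤ (1-ε) * (if (l:ℕ) + s + 1 < n then 1 else 0) := by
      intro l
      have heq : ∀ j ∈ Finset.univ.filter (fun j : Fin n => (j:ℕ) + (s+1) + 1 < n),
          Knpe n p ε l j = (1-ε) * Qnp n p l j := by
        intro j hj
        rw [Finset.mem_filter] at hj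
        exact K_eq_of_ne_top l j (by omega)
      rw [Finset.sum_congr rfl heq, ← Finset.mul_sum]
      by_cases hl : (l:ℕ) + s + 1 < n
      · rw [if_pos hl]
        refine mul_le_mul_of_nonneg_left ?_ (by linarith)
        calc (∑ j ∈ Finset.univ.filter (fun j : Fin n => (j:ℕ) + (s+1) + 1 < n), Qnp n p l j)
            ≤ ∑ j : Fin n, Qnp n p l j :=
              Finset.sum_le_sum_of_subset_of_nonneg (Finset.filter_subset _ _)
                (fun j _ _ => Q_nonneg hp0 hp1 l j)
          _ = 1 := Q_rowsum hn l
      · rw [if_neg hl, mul_zero]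
        have hz : ∀ j ∈ Finset.univ.filter (fun j : Fin n => (j:ℕ) + (s+1) + 1 < n),
            Qnp n p l j = 0 := by
          intro j hj
          rw [Finset.mem_filter] at hj
          exact Q_far l j (by omega)
        rw [Finset.sum_congr rfl hz, Finset.sum_const_zero, mul_zero]
    calc (∑ l : Fin n, ∑ j ∈ Finset.univ.filter (fun j : Fin n => (j:ℕ) + (s+1) + 1 < n),
            kpow (Knpe n p ε) s i l * Knpe n p ε l j)
        = ∑ l : Fin n, kpow (Knpe n p ε) s i l *
            ∑ j ∈ Finset.univ.filter (fun j : Fin n => (j:ℕ) + (s+1) + 1 < n), Knpe n p ε l j := by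
          refine Finset.sum_congr rfl fun l _ => (Finset.mul_sum _ _ _).symm
      _ ≤ ∑ l : Fin n, kpow (Knpe n p ε) s i l *
            ((1-ε) * (if (l:ℕ) + s + 1 < n then 1 else 0)) := by
          refine Finset.sum_le_sum fun l _ => ?_
          exact mul_le_mul_of_nonneg_left (key l) (kpow_nonneg hK s i l)
      _ = (1-ε) * ∑ l ∈ Finset.univ.filter (fun l : Fin n => (l:ℕ) + s + 1 < n),
            kpow (Knpe n p ε) s i l := by
          rw [Finset.mul_sum, Finset.sum_filter]
          refine Finset.sum_congr rfl fun l _ => ?_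
          split_ifs <;> ring
      _ ≤ (1-ε) * (1-ε)^s := mul_le_mul_of_nonneg_left (ih i) (by linarith)
      _ = (1-ε)^(s+1) := by ring

private lemma mass_low_ge (hp0 : 0 ≤ p) (hp1 : p ≤ 1) (hε0 : 0 ≤ ε) (hε1 : ε ≤ 1) :
    ∀ t : ℕ, t + 2 ≤ n → ∀ i0 : Fin n, (i0:ℕ) = 0 →
      (1-ε)^t ≤ ∑ j ∈ Finset.univ.filter (fun j : Fin n => (j:ℕ) ≤ t),
        kpow (Knpe n p ε) t i0 j := by
  have hK : ∀ i j : Fin n, 0 ≤ Knpe n p ε i j := K_nonneg hp0 hp1 hε0 hε1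
  intro t
  induction t with
  | zero =>
    intro _ i0 hi0
    simp only [kpow, pow_zero]
    rw [Finset.sum_ite_eq]
    rw [if_pos (by rw [Finset.mem_filter]; exact ⟨Finset.mem_univ _, by omega⟩)]
  | succ t ih =>
    intro hn3 i0 hi0
    have hn2 : 2 ≤ n := by omega
    simp only [kpow]
    rw [Finset.sum_comm]
    have key : ∀ l : Fin n, (l:ℕ) ≤ t →
        (1-ε) ≤ ∑ j ∈ Finset.univ.filter (fun j : Fin n => (j:ℕ) ≤ t+1), Knpe n p ε l j := by
      intro l hl
      calc (1-ε) = (1-ε) * ∑ j ∈ Finset.univ.filter (fun j : Fin n => (j:ℕ) ≤ t+1),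
              Qnp n p l j := by
            rw [Q_rowsum_subset hn2 l _ (fun j hj1 hj2 => by
              rw [Finset.mem_filter]; exact ⟨Finset.mem_univ _, by omega⟩), mul_one]
        _ = ∑ j ∈ Finset.univ.filter (fun j : Fin n => (j:ℕ) ≤ t+1), (1-ε) * Qnp n p l j :=
            Finset.mul_sum _ _ _
        _ ≤ ∑ j ∈ Finset.univ.filter (fun j : Fin n => (j:ℕ) ≤ t+1), Knpe n p ε l j :=
            Finset.sum_le_sum fun j _ => K_ge hp0 hp1 hε0 l j
    calc (1-ε)^(t+1) = (1-ε) * (1-ε)^t := by ring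
      _ ≤ (1-ε) * ∑ j ∈ Finset.univ.filter (fun j : Fin n => (j:ℕ) ≤ t),
            kpow (Knpe n p ε) t i0 j :=
          mul_le_mul_of_nonneg_left (ih (by omega) i0 hi0) (by linarith)
      _ = ∑ l ∈ Finset.univ.filter (fun l : Fin n => (l:ℕ) ≤ t),
            kpow (Knpe n p ε) t i0 l * (1-ε) := by
          rw [Finset.mul_sum]
          exact Finset.sum_congr rfl fun l _ => by ring
      _ ≤ ∑ l ∈ Finset.univ.filter (fun l : Fin n => (l:ℕ) ≤ t),
            kpow (Knpe n p ε) t i0 l *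
              ∑ j ∈ Finset.univ.filter (fun j : Fin n => (j:ℕ) ≤ t+1), Knpe n p ε l j := by
          refine Finset.sum_le_sum fun l hl => ?_
          rw [Finset.mem_filter] at hl
          exact mul_le_mul_of_nonneg_left (key l hl.2) (kpow_nonneg hK t i0 l)
      _ ≤ ∑ l : Fin n, kpow (Knpe n p ε) t i0 l *
              ∑ j ∈ Finset.univ.filter (fun j : Fin n => (j:ℕ) ≤ t+1), Knpe n p ε l j := by
          refine Finset.sum_le_sum_of_subset_of_nonneg (Finset.filter_subset _ _)
            (fun l _ _ => mul_nonneg (kpow_nonneg hK t i0 l)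
              (Finset.sum_nonneg fun j _ => hK l j))
      _ = ∑ l : Fin n, ∑ j ∈ Finset.univ.filter (fun j : Fin n => (j:ℕ) ≤ t+1),
            kpow (Knpe n p ε) t i0 l * Knpe n p ε l j := by
          exact Finset.sum_congr rfl fun l _ => Finset.mul_sum _ _ _

private lemma contract (hp0 : 0 ≤ p) (hp1 : p ≤ 1) (hε0 : 0 ≤ ε) (hε1 : ε ≤ 1)
    (hn : 2 ≤ n) (μ ν : Fin n → ℝ) (hm : ∑ l, μ l = ∑ l, ν l) :
    ∑ j, |(∑ l, μ l * Knpe n p ε l j) - (∑ l, ν l * Knpe n p ε l j)|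
      ≤ (1-ε) * ∑ l, |μ l - ν l| := by
  have key : ∀ j : Fin n, (∑ l, μ l * Knpe n p ε l j) - (∑ l, ν l * Knpe n p ε l j)
      = (1-ε) * ∑ l, (μ l - ν l) * Qnp n p l j := by
    intro j
    rw [← Finset.sum_sub_distrib, Finset.mul_sum]
    have h1 : ∀ l : Fin n, μ l * Knpe n p ε l j - ν l * Knpe n p ε l j
        = (1-ε) * ((μ l - ν l) * Qnp n p l j)
          + (μ l - ν l) * (if (j:ℕ)+1 = n then ε else 0) := by
      intro l; unfold Knpe; ring
    rw [Finset.sum_congr rfl fun l _ => h1 l, Finset.sum_add_distrib]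
    have h2 : ∑ l, (μ l - ν l) * (if (j:ℕ)+1 = n then ε else 0)
        = (∑ l, (μ l - ν l)) * (if (j:ℕ)+1 = n then ε else 0) := (Finset.sum_mul _ _ _).symm
    rw [h2, Finset.sum_sub_distrib, hm, sub_self, zero_mul, add_zero]
  calc ∑ j, |(∑ l, μ l * Knpe n p ε l j) - (∑ l, ν l * Knpe n p ε l j)|
      = ∑ j, (1-ε) * |∑ l, (μ l - ν l) * Qnp n p l j| := by
        refine Finset.sum_congr rfl fun j _ => ?_
        rw [key j, abs_mul, abs_of_nonneg (by linarith : (0:ℝ) ≤ 1-ε)]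
    _ ≤ ∑ j, (1-ε) * ∑ l, |μ l - ν l| * Qnp n p l j := by
        refine Finset.sum_le_sum fun j _ => ?_
        refine mul_le_mul_of_nonneg_left ?_ (by linarith)
        calc |∑ l, (μ l - ν l) * Qnp n p l j| ≤ ∑ l, |(μ l - ν l) * Qnp n p l j| :=
              Finset.abs_sum_le_sum_abs _ _
          _ = ∑ l, |μ l - ν l| * Qnp n p l j := by
              refine Finset.sum_congr rfl fun l _ => ?_
              rw [abs_mul, abs_of_nonneg (Q_nonneg hp0 hp1 l j)]
    _ = (1-ε) * ∑ l, |μ l - ν l| * ∑ j, Qnp n p l j := by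
        rw [← Finset.mul_sum, Finset.sum_comm]
        congr 1
        refine Finset.sum_congr rfl fun l _ => (Finset.mul_sum _ _ _).symm
    _ = (1-ε) * ∑ l, |μ l - ν l| := by
        congr 1
        refine Finset.sum_congr rfl fun l _ => by rw [Q_rowsum hn, mul_one]

private lemma l1_kpow_le (hp0 : 0 ≤ p) (hp1 : p ≤ 1) (hε0 : 0 ≤ ε) (hε1 : ε ≤ 1)
    (hn : 2 ≤ n) (pi : Fin n → ℝ) (hpi0 : ∀ i, 0 ≤ pi i) (hpi1 : ∑ i, pi i = 1)
    (hstat : ∀ j, ∑ i, pi i * Knpe n p ε i j = pi j) (t : ℕ) (i : Fin n) :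
    ∑ j, |kpow (Knpe n p ε) t i j - pi j| ≤ 2 * (1-ε)^t := by
  have hK : ∀ i j : Fin n, 0 ≤ Knpe n p ε i j := K_nonneg hp0 hp1 hε0 hε1
  induction t with
  | zero =>
    have h1 : ∑ j, |kpow (Knpe n p ε) 0 i j - pi j|
        ≤ ∑ j, (kpow (Knpe n p ε) 0 i j + pi j) := by
      refine Finset.sum_le_sum fun j _ => ?_
      rw [sub_eq_add_neg]
      refine (abs_add_le _ _).trans ?_
      rw [abs_neg, abs_of_nonneg (kpow_nonneg hK 0 i j), abs_of_nonneg (hpi0 j)]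
    rw [Finset.sum_add_distrib, kpow_rowsum hn 0 i, hpi1] at h1
    rw [pow_zero]
    linarith
  | succ t ih =>
    have heq : ∑ j, |kpow (Knpe n p ε) (t+1) i j - pi j|
        = ∑ j, |(∑ l, kpow (Knpe n p ε) t i l * Knpe n p ε l j)
            - (∑ l, pi l * Knpe n p ε l j)| := by
      refine Finset.sum_congr rfl fun j _ => ?_
      simp only [kpow]
      rw [hstat j]
    rw [heq]
    calc ∑ j, |(∑ l, kpow (Knpe n p ε) t i l * Knpe n p ε l j)
            - (∑ l, pi l * Knpe n p ε l j)|
        ≤ (1-ε) * ∑ l, |kpow (Knpe n p ε) t i l - pi l| :=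
          contract hp0 hp1 hε0 hε1 hn _ _ (by rw [kpow_rowsum hn, hpi1])
      _ ≤ (1-ε) * (2 * (1-ε)^t) := mul_le_mul_of_nonneg_left ih (by linarith)
      _ = 2 * (1-ε)^(t+1) := by ring

private lemma l1_ge (μ ν : Fin n → ℝ) (h : ∑ j, μ j = ∑ j, ν j) (B : Finset (Fin n)) :
    2 * ((∑ j ∈ B, ν j) - ∑ j ∈ B, μ j) ≤ ∑ j, |μ j - ν j| := by
  have hsplit : ∑ j, |μ j - ν j| = (∑ j ∈ B, |μ j - ν j|) + ∑ j ∈ Bᶜ, |μ j - ν j| :=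
    (Finset.sum_add_sum_compl B _).symm
  have h1 : (∑ j ∈ B, ν j) - (∑ j ∈ B, μ j) ≤ ∑ j ∈ B, |μ j - ν j| := by
    rw [← Finset.sum_sub_distrib]
    refine Finset.sum_le_sum fun j _ => ?_
    rw [abs_sub_comm]
    exact le_abs_self _
  have hμ := Finset.sum_add_sum_compl B μ
  have hν := Finset.sum_add_sum_compl B ν
  have hc : ∑ j ∈ Bᶜ, (μ j - ν j) = (∑ j ∈ B, ν j) - ∑ j ∈ B, μ j := by
    rw [Finset.sum_sub_distrib]
    linarith
  have h2 : (∑ j ∈ B, ν j) - ∑ j ∈ B, μ j ≤ ∑ j ∈ Bᶜ, |μ j - ν j| := by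
    rw [← hc]
    exact Finset.sum_le_sum fun j _ => le_abs_self _
  linarith

end aux

set_option maxHeartbeats 1000000 in
/-- Fix `p ∈ (0,1/2)` and a sequence `C_n → ∞` with
`ε_n := C_n/n ∈ (0,1)` for all (positive) `n`.  Then there are `c > 0` and `N` such that
for all `n ≥ N`, the mixing time of `K_{n,p,ε_n}` (with stationary distribution `π`)
is at least `c·n/C_n`. -/


theorem stmt10 (p : ℝ) (hp : p ∈ Set.Ioo (0 : ℝ) (1/2))
    (C : ℕ → ℝ) (hC : Filter.Tendsto C Filter.atTop Filter.atTop)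
    (hε : ∀ n : ℕ, 1 ≤ n → C n / n ∈ Set.Ioo (0 : ℝ) 1) :
    ∃ c : ℝ, 0 < c ∧ ∃ N : ℕ, ∀ n : ℕ, N ≤ n → ∀ pi : Fin n → ℝ,
      (∀ i, 0 ≤ pi i) → (∑ i, pi i = 1) →
      (∀ j, ∑ i, pi i * Knpe n p (C n / n) i j = pi j) →
      c * n / C n ≤ (mixTime (Knpe n p (C n / n)) pi : ℝ) := by
  obtain ⟨hp0, hp2⟩ := hp
  refine ⟨1/8, by norm_num, ?_⟩
  obtain ⟨N1, hN1⟩ := Filter.eventually_atTop.mp (Filter.tendsto_atTop.mp hC 8)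
  refine ⟨max N1 100, ?_⟩
  intro n hn pi hpi0 hpi1 hstat
  have hn100 : 100 ≤ n := le_trans (le_max_right _ _) hn
  have hCn : 8 ≤ C n := hN1 n (le_trans (le_max_left _ _) hn)
  obtain ⟨hε0, hε1⟩ := hε n (by omega)
  set ε := C n / n with hεdef
  have hp1 : p ≤ 1 := by linarith
  have hp0' : 0 ≤ p := le_of_lt hp0
  have hε0' : 0 ≤ ε := le_of_lt hε0
  have hε1' : ε ≤ 1 := le_of_lt hε1
  clear_value ε
  have hn2 : 2 ≤ n := by omega
  have hnR : (0:ℝ) < n := by exact_mod_cast Nat.pos_of_ne_zero (by omega)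
  have hnR100 : (100:ℝ) ≤ n := by exact_mod_cast hn100
  have hCpos : (0:ℝ) < C n := by linarith
  have hK : ∀ i j : Fin n, 0 ≤ Knpe n p ε i j := K_nonneg hp0' hp1 hε0' hε1'
  -- the set defining the mixing time is nonempty
  have hSne : {t : ℕ | ∀ i, dTV (kpow (Knpe n p ε) t i) pi < 1/4}.Nonempty := by
    obtain ⟨t, ht⟩ := exists_pow_lt_of_lt_one (show (0:ℝ) < 1/4 by norm_num)
      (show 1 - ε < 1 by linarith)
    refine ⟨t, fun i => ?_⟩
    have hl1 := l1_kpow_le hp0' hp1 hε0' hε1' hn2 pi hpi0 hpi1 hstat t i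
    unfold dTV
    linarith
  set T := mixTime (Knpe n p ε) pi with hTdef
  have hTmem : ∀ i, dTV (kpow (Knpe n p ε) T i) pi < 1/4 := Nat.sInf_mem hSne
  clear_value T
  by_contra hcon
  push_neg at hcon
  -- basic size estimates
  have htε : (T:ℝ) * ε < 1/8 := by
    have h0 := mul_lt_mul_of_pos_right hcon hε0
    rw [hεdef] at h0 ⊢
    calc (T:ℝ) * (C n / n) < 1/8 * n / C n * (C n / n) := h0
      _ = 1/8 := by field_simp
  have hTn : (T:ℝ) < n/64 := by
    have h1 : 1/8 * (n:ℝ) / C n ≤ n/64 := by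
      rw [div_le_div_iff₀ hCpos (by norm_num)]
      nlinarith
    linarith
  have hT2 : T + 2 ≤ n := by
    have h1 : ((T:ℝ)) + 2 ≤ (n:ℝ) := by nlinarith
    exact_mod_cast h1
  set m := n - (T + 2) with hmdef
  clear_value m
  have hmcast : (m:ℝ) = (n:ℝ) - T - 2 := by
    rw [hmdef, Nat.cast_sub hT2]
    push_cast
    ring
  have hmε : 4 ≤ (m:ℝ) * ε := by
    rw [hmcast, hεdef]
    have h1 : (n:ℝ)/2 ≤ (n:ℝ) - T - 2 := by nlinarith
    calc (4:ℝ) ≤ C n / 2 := by linarith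
      _ = ((n:ℝ)/2) * (C n / n) := by field_simp
      _ ≤ ((n:ℝ) - T - 2) * (C n / n) := by
          refine mul_le_mul_of_nonneg_right h1 (le_of_lt ?_)
          rw [← hεdef]; exact hε0
  -- Bernoulli-type bounds
  have hb1 : 1 - (T:ℝ) * ε ≤ (1-ε)^T := by
    have h := one_add_mul_le_pow (show (-2:ℝ) ≤ -ε by linarith) T
    have h2 : 1 + (T:ℝ) * (-ε) = 1 - (T:ℝ) * ε := by ring
    rw [h2] at h
    have h3 : ((1:ℝ) + -ε) = 1 - ε := by ring
    rw [h3] at h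
    exact h
  have hb2 : (1-ε)^m ≤ 1/5 := by
    have hmg : 1 + (m:ℝ) * ε ≤ (1+ε)^m := by
      have h := one_add_mul_le_pow (show (-2:ℝ) ≤ ε by linarith) m
      exact h
    have hprod : (1-ε)^m * (1+ε)^m ≤ 1 := by
      rw [← mul_pow]
      have he : (1-ε) * (1+ε) = 1 - ε^2 := by ring
      rw [he]
      refine pow_le_one₀ (by nlinarith [sq_nonneg ε]) (by nlinarith [sq_nonneg ε])
    have hpos : (0:ℝ) ≤ (1-ε)^m := pow_nonneg (by linarith) m
    have h5 : (5:ℝ) ≤ 1 + (m:ℝ)*ε := by linarith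
    have hx1 : (1-ε)^m * (1 + (m:ℝ)*ε) ≤ (1-ε)^m * (1+ε)^m :=
      mul_le_mul_of_nonneg_left hmg hpos
    have hx2 : (1-ε)^m * 5 ≤ (1-ε)^m * (1 + (m:ℝ)*ε) :=
      mul_le_mul_of_nonneg_left h5 hpos
    linarith
  -- measure concentration facts
  set i0 : Fin n := ⟨0, by omega⟩ with hi0def
  set L : Finset (Fin n) := Finset.univ.filter (fun j : Fin n => (j:ℕ) + m + 1 < n) with hLdef
  have hμlow : (1-ε)^T ≤ ∑ j ∈ L, kpow (Knpe n p ε) T i0 j := by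
    refine le_trans (mass_low_ge hp0' hp1 hε0' hε1' T hT2 i0 rfl) ?_
    refine Finset.sum_le_sum_of_subset_of_nonneg ?_
      (fun j _ _ => kpow_nonneg hK T i0 j)
    intro j hj
    rw [Finset.mem_filter] at hj ⊢
    refine ⟨Finset.mem_univ _, ?_⟩
    omega
  have hπlow : ∑ j ∈ L, pi j ≤ (1-ε)^m := by
    have he : ∑ j ∈ L, pi j = ∑ i, pi i * ∑ j ∈ L, kpow (Knpe n p ε) m i j := by
      calc ∑ j ∈ L, pi j = ∑ j ∈ L, ∑ i, pi i * kpow (Knpe n p ε) m i j :=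
            Finset.sum_congr rfl fun j _ => (pi_kpow pi hstat m j).symm
        _ = ∑ i, ∑ j ∈ L, pi i * kpow (Knpe n p ε) m i j := Finset.sum_comm
        _ = ∑ i, pi i * ∑ j ∈ L, kpow (Knpe n p ε) m i j :=
            Finset.sum_congr rfl fun i _ => (Finset.mul_sum _ _ _).symm
    rw [he]
    calc ∑ i, pi i * ∑ j ∈ L, kpow (Knpe n p ε) m i j
        ≤ ∑ i, pi i * (1-ε)^m := by
          refine Finset.sum_le_sum fun i _ => ?_
          exact mul_le_mul_of_nonneg_left (mass_low_le hp0' hp1 hε0' hε1' hn2 m i) (hpi0 i)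
      _ = (1-ε)^m := by rw [← Finset.sum_mul, hpi1, one_mul]
  -- total mass identities
  have hμtot : ∑ j, kpow (Knpe n p ε) T i0 j = 1 := kpow_rowsum hn2 T i0
  have hμL := Finset.sum_add_sum_compl L (kpow (Knpe n p ε) T i0)
  have hπL := Finset.sum_add_sum_compl L pi
  -- the TV lower bound
  have hTV := l1_ge (kpow (Knpe n p ε) T i0) pi (by rw [hμtot, hpi1]) Lᶜ
  have hd := hTmem i0
  unfold dTV at hd
  -- numbers: pi(Lᶜ) ≥ 1 - (1-ε)^m, μ(Lᶜ) ≤ 1 - (1-ε)^T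
  have hπB : 1 - (1-ε)^m ≤ ∑ j ∈ Lᶜ, pi j := by linarith
  have hμB : ∑ j ∈ Lᶜ, kpow (Knpe n p ε) T i0 j ≤ 1 - (1-ε)^T := by linarith
  have hT78 : (7:ℝ)/8 < (1-ε)^T := by linarith
  linarith
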